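/- Let ≤ be a well-order on W and let Π be a ≤-compatible term-rewriting system on V = W →₀ k. Then Π is confluent if and only if k·Irr(Π) ∩ I_Π = 0. -/

import Mathlib

set_option linter.unusedSectionVars false

/-- One-step rewriting relation of a term-rewriting system `S ⊆ W × (W →₀ k)`. -/
def RewStep {k W : Type*} [Field k] (S : Set (W × (W →₀ k))) (f g : W →₀ k) : Prop :=
  ∃ t v, (t, v) ∈ S ∧ f t ≠ 0 ∧ g = f - Finsupp.single t (f t) + f t • v

/-- A rewriting system is `≤`-compatible if every monomial in the support of a
right-hand side is strictly smaller than the left-hand side. -/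
def RewCompatible {k W : Type*} [Field k] [LinearOrder W] (S : Set (W × (W →₀ k))) : Prop :=
  ∀ p ∈ S, ∀ w ∈ (p.2 : W →₀ k).support, w < p.1

/-- Confluence: any two rewritings of a common element are joinable. -/
def RewConfluent {k W : Type*} [Field k] (S : Set (W × (W →₀ k))) : Prop :=
  ∀ f g₁ g₂ : W →₀ k, Relation.ReflTransGen (RewStep S) f g₁ →
    Relation.ReflTransGen (RewStep S) f g₂ →
      ∃ h, Relation.ReflTransGen (RewStep S) g₁ h ∧ Relation.ReflTransGen (RewStep S) g₂ h

/-- The linear span `I_S` of the elements `δ_t - v` for the rules `(t, v)` of `S`. -/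
noncomputable def RewIdeal {k W : Type*} [Field k] (S : Set (W × (W →₀ k))) : Submodule k (W →₀ k) :=
  Submodule.span k {x : W →₀ k | ∃ p ∈ S, x = Finsupp.single p.1 (1 : k) - p.2}

/-- `Irr(S)`: the set of basis elements that are not the left-hand side of any rule. -/
def RewIrr {k W : Type*} [Field k] (S : Set (W × (W →₀ k))) : Set W :=
  {w | ∀ v, (w, v) ∉ S}

/-- `k·Irr(S)`: the linear span of the irreducible basis elements. -/
noncomputable def RewIrrSpan {k W : Type*} [Field k] (S : Set (W × (W →₀ k))) : Submodule k (W →₀ k) :=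
  Submodule.span k ((fun w => Finsupp.single w (1 : k)) '' RewIrr S)

section Aux

variable {k W : Type*} [Field k] [LinearOrder W] {S : Set (W × (W →₀ k))}

lemma Rew.compat_apply (hS : RewCompatible S) {t : W} {v : W →₀ k} (h : (t, v) ∈ S)
    {j : W} (hj : t ≤ j) : v j = 0 := by
  by_contra hne
  exact absurd (hS (t, v) h j (Finsupp.mem_support_iff.2 hne)) (not_lt.2 hj)

lemma Rew.step_sub_mem {f g : W →₀ k} (h : RewStep S f g) : f - g ∈ RewIdeal S := by
  obtain ⟨t, v, hm, hft, rfl⟩ := h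
  have : f - (f - Finsupp.single t (f t) + f t • v) = f t • (Finsupp.single t 1 - v) := by
    rw [smul_sub, Finsupp.smul_single, smul_eq_mul, mul_one]; abel
  rw [this]
  exact Submodule.smul_mem _ _ (Submodule.subset_span ⟨(t, v), hm, rfl⟩)

lemma Rew.rtg_sub_mem {f g : W →₀ k} (h : Relation.ReflTransGen (RewStep S) f g) :
    f - g ∈ RewIdeal S := by
  induction h with
  | refl => simp
  | tail _ hbc ih =>
    rename_i b c _
    have : f - c = (f - b) + (b - c) := by abel
    rw [this]
    exact Submodule.add_mem _ ih (Rew.step_sub_mem hbc)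

lemma Rew.wf (hS : RewCompatible S) [WellFoundedLT W] :
    WellFounded (fun g f : W →₀ k => RewStep S f g) := by
  classical
  set μ : (W →₀ k) → (W →₀ ℕ) :=
    fun f => f.mapRange (fun c => if c = 0 then 0 else 1) (by simp) with hμ
  have htri : IsTrichotomous W (· > ·) := by
    constructor
    intro a b
    rcases lt_trichotomy a b with h | h | h
    · exact fun _ h2 => absurd h h2
    · exact fun _ _ => h
    · exact fun h1 _ => absurd h h1
  have hwf : WellFounded (Finsupp.Lex ((· > ·) : W → W → Prop) ((· < ·) : ℕ → ℕ → Prop)) := by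
    refine Finsupp.Lex.wellFounded' (fun n h => Nat.not_lt_zero n h) Nat.lt_wfRel.wf ?_
    exact wellFounded_lt
  refine Subrelation.wf ?_ (InvImage.wf μ hwf)
  rintro g f ⟨t, v, hm, hft, rfl⟩
  refine ⟨t, fun j hj => ?_, ?_⟩
  · have hvj : v j = 0 := Rew.compat_apply hS hm (le_of_lt hj)
    have : (f - Finsupp.single t (f t) + f t • v) j = f j := by
      simp [Finsupp.single_apply, (ne_of_gt hj).symm, hvj]
    simp [hμ, Finsupp.mapRange_apply, this]
  · have hvt : v t = 0 := Rew.compat_apply hS hm le_rfl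
    have : (f - Finsupp.single t (f t) + f t • v) t = 0 := by
      simp [hvt]
    simp [hμ, Finsupp.mapRange_apply, this, hft]

lemma Rew.exists_nf (hS : RewCompatible S) [WellFoundedLT W] (f : W →₀ k) :
    ∃ h, Relation.ReflTransGen (RewStep S) f h ∧ ∀ w ∈ h.support, w ∈ RewIrr S := by
  induction f using (Rew.wf hS).induction with
  | _ f ih =>
    by_cases hf : ∀ w ∈ f.support, w ∈ RewIrr S
    · exact ⟨f, Relation.ReflTransGen.refl, hf⟩
    · push_neg at hf
      obtain ⟨t, ht, hnot⟩ := hf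
      simp only [RewIrr, Set.mem_setOf_eq, not_forall, not_not] at hnot
      obtain ⟨v, hv⟩ := hnot
      have hstep : RewStep S f (f - Finsupp.single t (f t) + f t • v) :=
        ⟨t, v, hv, Finsupp.mem_support_iff.1 ht, rfl⟩
      obtain ⟨h, hh, hirr⟩ := ih _ hstep
      exact ⟨h, Relation.ReflTransGen.head hstep hh, hirr⟩

lemma Rew.mem_irrSpan_iff {f : W →₀ k} :
    f ∈ RewIrrSpan S ↔ ∀ w ∈ f.support, w ∈ RewIrr S := by
  rw [RewIrrSpan, ← Finsupp.supported_eq_span_single, Finsupp.mem_supported]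
  exact ⟨fun h w hw => h hw, fun h w hw => h w hw⟩

lemma Rew.rtg_zero {g : W →₀ k} (h : Relation.ReflTransGen (RewStep S) 0 g) : g = 0 := by
  induction h with
  | refl => rfl
  | tail _ hbc ih =>
    subst ih
    obtain ⟨t, v, _, hft, _⟩ := hbc
    simp at hft

lemma Rew.rtg_of_irr {f g : W →₀ k} (hf : ∀ w ∈ f.support, w ∈ RewIrr S)
    (h : Relation.ReflTransGen (RewStep S) f g) : g = f := by
  rcases Relation.ReflTransGen.cases_head h with h | ⟨b, hfb, _⟩
  · exact h.symm
  · obtain ⟨t, v, hm, hft, _⟩ := hfb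
    exact absurd hm (hf t (Finsupp.mem_support_iff.2 hft) v)

lemma Rew.rtg_smul {f g : W →₀ k} (h : Relation.ReflTransGen (RewStep S) f g) (c : k) :
    Relation.ReflTransGen (RewStep S) (c • f) (c • g) := by
  rcases eq_or_ne c 0 with rfl | hc
  · simp only [zero_smul]
    exact Relation.ReflTransGen.refl
  · induction h with
    | refl => exact Relation.ReflTransGen.refl
    | tail _ hbc ih =>
      rename_i b d _
      refine ih.tail ?_
      obtain ⟨t, v, hm, hbt, rfl⟩ := hbc
      refine ⟨t, v, hm, by simp [hc, hbt], ?_⟩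
      rw [smul_add, smul_sub, Finsupp.smul_apply, Finsupp.smul_single, smul_smul]
      simp [smul_eq_mul]

lemma Rew.step_add (hS : RewCompatible S) {f h : W →₀ k} (hstep : RewStep S f h) (g : W →₀ k) :
    ∃ p, Relation.ReflTransGen (RewStep S) (f + g) p ∧
      Relation.ReflTransGen (RewStep S) (h + g) p := by
  obtain ⟨t, v, hm, hft, rfl⟩ := hstep
  have hvt : v t = 0 := Rew.compat_apply hS hm le_rfl
  have hht : (f - Finsupp.single t (f t) + f t • v + g) t = g t := by simp [hvt]
  have key : ∀ a b : k, f - Finsupp.single t a + a • v + g - Finsupp.single t b + b • v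
      = f + g - Finsupp.single t (a + b) + (a + b) • v := by
    intro a b; rw [Finsupp.single_add, add_smul]; abel
  by_cases hfg : f t + g t = 0
  · refine ⟨f + g, Relation.ReflTransGen.refl, Relation.ReflTransGen.single ?_⟩
    refine ⟨t, v, hm, ?_, ?_⟩
    · rw [hht]; intro h0; rw [h0, add_zero] at hfg; exact hft hfg
    · rw [hht, key, hfg]; simp
  · refine ⟨f + g - Finsupp.single t ((f + g) t) + ((f + g) t) • v,
      Relation.ReflTransGen.single ⟨t, v, hm, by simpa using hfg, rfl⟩, ?_⟩
    by_cases hgt : g t = 0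
    · have : f - Finsupp.single t (f t) + f t • v + g
          = f + g - Finsupp.single t ((f + g) t) + ((f + g) t) • v := by
        have := key (f t) (g t)
        simp only [hgt, Finsupp.single_zero, zero_smul, sub_zero, add_zero] at this ⊢
        rw [Finsupp.add_apply, hgt, add_zero]
        simpa using this
      rw [this]
    · refine Relation.ReflTransGen.single ⟨t, v, hm, by rw [hht]; exact hgt, ?_⟩
      rw [hht, key, Finsupp.add_apply]

lemma Rew.rtg_add (hS : RewCompatible S) (hc : RewConfluent S) {f h : W →₀ k}
    (hf : Relation.ReflTransGen (RewStep S) f h) (g : W →₀ k) :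
    ∃ p, Relation.ReflTransGen (RewStep S) (f + g) p ∧
      Relation.ReflTransGen (RewStep S) (h + g) p := by
  induction hf using Relation.ReflTransGen.head_induction_on with
  | refl => exact ⟨h + g, Relation.ReflTransGen.refl, Relation.ReflTransGen.refl⟩
  | head hstep _ ih =>
    rename_i a b _
    obtain ⟨q, hq1, hq2⟩ := ih
    obtain ⟨p, hp1, hp2⟩ := Rew.step_add hS hstep g
    obtain ⟨r, hr1, hr2⟩ := hc (b + g) p q hp2 hq1
    exact ⟨r, hp1.trans hr1, hq2.trans hr2⟩

lemma Rew.ideal_rtg_zero (hS : RewCompatible S) (hc : RewConfluent S) {f : W →₀ k}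
    (hf : f ∈ RewIdeal S) : Relation.ReflTransGen (RewStep S) f 0 := by
  induction hf using Submodule.span_induction with
  | mem x hx =>
    obtain ⟨⟨t, v⟩, hm, rfl⟩ := hx
    have hvt : v t = 0 := Rew.compat_apply hS hm le_rfl
    have hxt : (Finsupp.single t (1 : k) - v) t = 1 := by simp [hvt]
    refine Relation.ReflTransGen.single ⟨t, v, hm, by rw [hxt]; exact one_ne_zero, ?_⟩
    rw [hxt, one_smul]; abel
  | zero => exact Relation.ReflTransGen.refl
  | add x y hx hy ihx ihy =>
    obtain ⟨p, hp1, hp2⟩ := Rew.rtg_add hS hc ihx y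
    rw [zero_add] at hp2
    obtain ⟨r, hr1, hr2⟩ := hc y p 0 hp2 ihy
    have : r = 0 := Rew.rtg_zero hr2
    subst this
    exact hp1.trans hr1
  | smul c x hx ih =>
    have := Rew.rtg_smul ih c
    simpa using this

end Aux

/-- A `≤`-compatible rewriting system over a well-ordered set is confluent
if and only if `k·Irr(S) ∩ I_S = 0`. -/
theorem confluent_iff_irr_inf_ideal_eq_bot {k W : Type*} [Field k] [LinearOrder W]
    [WellFoundedLT W] (S : Set (W × (W →₀ k))) (hS : RewCompatible S) :
    RewConfluent S ↔ RewIrrSpan S ⊓ RewIdeal S = ⊥ := by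
  constructor
  · intro hc
    rw [eq_bot_iff]
    intro x hx
    obtain ⟨hx1, hx2⟩ := Submodule.mem_inf.1 hx
    have h0 : Relation.ReflTransGen (RewStep S) x 0 := Rew.ideal_rtg_zero hS hc hx2
    have := Rew.rtg_of_irr (Rew.mem_irrSpan_iff.1 hx1) h0
    simp [← this]
  · intro hbot f g₁ g₂ h1 h2
    obtain ⟨h₁, hh1, hirr1⟩ := Rew.exists_nf hS g₁
    obtain ⟨h₂, hh2, hirr2⟩ := Rew.exists_nf hS g₂
    have hsub : h₁ - h₂ ∈ RewIrrSpan S ⊓ RewIdeal S := by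
      refine Submodule.mem_inf.2 ⟨?_, ?_⟩
      · refine Rew.mem_irrSpan_iff.2 fun w hw => ?_
        rcases Finset.mem_union.1 (Finsupp.support_sub hw) with h | h
        · exact hirr1 w h
        · exact hirr2 w h
      · have e1 : f - h₁ ∈ RewIdeal S := Rew.rtg_sub_mem (h1.trans hh1)
        have e2 : f - h₂ ∈ RewIdeal S := Rew.rtg_sub_mem (h2.trans hh2)
        have : h₁ - h₂ = (f - h₂) - (f - h₁) := by abel
        rw [this]
        exact Submodule.sub_mem _ e2 e1
    rw [hbot, Submodule.mem_bot] at hsub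
    have heq : h₁ = h₂ := sub_eq_zero.1 hsub
    exact ⟨h₁, hh1, heq ▸ hh2⟩
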